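/- Under the hypotheses of the induction lemma with budget βk in place of k (i.e., ∑_{j=1}^{l+1} c_j > βk and f(X'_i) − f(X'_{i−1}) ≥ (c_i α/k)(OPT − f(X'_{i−1}))), for α ∈ (0,1] and β ≥ 1 we have f(X'_{l+1}) ≥ (1 − 1/e^{αβ})·OPT. -/

import Mathlib

/-- Bi-criterion version: if the greedy solution exceeds budget `βk`
(`∑ c_j > βk`), then `f(X'_{l+1}) ≥ (1 − 1/e^{αβ})·OPT`. -/
theorem stmt12 {α : Type*} [DecidableEq α] (f : Finset α → ℝ)
    (hnonneg : ∀ A, 0 ≤ f A)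
    (hmono : ∀ A B : Finset α, A ⊆ B → f A ≤ f B)
    (hempty : f ∅ = 0)
    (Xstar : Finset α) (OPT : ℝ) (hOPT : f Xstar = OPT)
    (l : ℕ) (X' : ℕ → Finset α) (hX0 : X' 0 = ∅)
    (hchain : ∀ i, i ≤ l → X' i ⊆ X' (i + 1))
    (c : ℕ → ℝ) (hcpos : ∀ i, 1 ≤ i → i ≤ l + 1 → 0 < c i)
    (a k β : ℝ) (ha0 : 0 < a) (ha1 : a ≤ 1) (hk : 0 < k) (hβ : 1 ≤ β)
    (hstep : ∀ i, 1 ≤ i → i ≤ l + 1 →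
      f (X' i) - f (X' (i - 1)) ≥ (c i * a / k) * (OPT - f (X' (i - 1))))
    (hbudget : ∑ j ∈ Finset.Icc 1 (l + 1), c j > β * k) :
    f (X' (l + 1)) ≥ (1 - 1 / Real.exp (a * β)) * OPT := by
  have hOPTnn : 0 ≤ OPT := hOPT ▸ hnonneg Xstar
  have key : ∀ n, n ≤ l + 1 →
      OPT - f (X' n) ≤ Real.exp (-(a / k) * ∑ j ∈ Finset.Icc 1 n, c j) * OPT := by
    intro n
    induction n with
    | zero =>
      intro _
      simp [hX0, hempty]
    | succ n ih =>
      intro hn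
      have hn' : n ≤ l + 1 := Nat.le_of_succ_le hn
      have ih' := ih hn'
      have hstepn := hstep (n + 1) (Nat.le_add_left 1 n) hn
      simp only [Nat.add_sub_cancel] at hstepn
      have hsum : ∑ j ∈ Finset.Icc 1 (n + 1), c j =
          (∑ j ∈ Finset.Icc 1 n, c j) + c (n + 1) :=
        Finset.sum_Icc_succ_top (Nat.le_add_left 1 n) c
      have hc1 : 0 < c (n + 1) := hcpos (n + 1) (Nat.le_add_left 1 n) hn
      by_cases hpos : 0 ≤ OPT - f (X' n)
      · -- main case
        have h1 : OPT - f (X' (n + 1)) ≤ (1 - c (n + 1) * a / k) * (OPT - f (X' n)) := by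
          nlinarith [hstepn]
        have h2 : (1 - c (n + 1) * a / k) ≤ Real.exp (-(c (n + 1) * a / k)) := by
          have := Real.add_one_le_exp (-(c (n + 1) * a / k))
          linarith
        have h3 : (1 - c (n + 1) * a / k) * (OPT - f (X' n)) ≤
            Real.exp (-(c (n + 1) * a / k)) * (OPT - f (X' n)) :=
          mul_le_mul_of_nonneg_right h2 hpos
        have h4 : Real.exp (-(c (n + 1) * a / k)) * (OPT - f (X' n)) ≤
            Real.exp (-(c (n + 1) * a / k)) *
              (Real.exp (-(a / k) * ∑ j ∈ Finset.Icc 1 n, c j) * OPT) :=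
          mul_le_mul_of_nonneg_left ih' (Real.exp_pos _).le
        calc OPT - f (X' (n + 1)) ≤ _ := h1
          _ ≤ _ := h3
          _ ≤ _ := h4
          _ = Real.exp (-(a / k) * ∑ j ∈ Finset.Icc 1 (n + 1), c j) * OPT := by
            rw [hsum, ← mul_assoc, ← Real.exp_add]
            ring_nf
      · -- f (X' n) > OPT, then f (X' (n+1)) ≥ f (X' n) > OPT
        have hsub : X' n ⊆ X' (n + 1) := hchain n (Nat.lt_succ_iff.mp hn)
        have := hmono _ _ hsub
        have : OPT - f (X' (n + 1)) ≤ 0 := by linarith [not_le.mp hpos]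
        exact this.trans (mul_nonneg (Real.exp_pos _).le hOPTnn)
  have hfinal := key (l + 1) le_rfl
  -- exp(-(a/k)*∑) ≤ exp(-aβ)
  have hexp : Real.exp (-(a / k) * ∑ j ∈ Finset.Icc 1 (l + 1), c j) ≤
      Real.exp (-(a * β)) := by
    apply Real.exp_le_exp.mpr
    have hak : 0 < a / k := div_pos ha0 hk
    have : a * β ≤ (a / k) * ∑ j ∈ Finset.Icc 1 (l + 1), c j := by
      have := mul_le_mul_of_nonneg_left hbudget.le hak.le
      calc a * β = (a / k) * (β * k) := by field_simp
        _ ≤ _ := this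
    linarith
  have : OPT - f (X' (l + 1)) ≤ Real.exp (-(a * β)) * OPT :=
    hfinal.trans (mul_le_mul_of_nonneg_right hexp hOPTnn)
  have hexpinv : Real.exp (-(a * β)) = 1 / Real.exp (a * β) := by
    rw [Real.exp_neg]; ring
  rw [ge_iff_le]
  nlinarith [this, hexpinv]
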